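/- Let A_1 ∈ ℝ^{m×m} and A_2 ∈ ℝ^{n×n} be symmetric positive definite, B ∈ ℝ^{m×n}, and set C = A_1^{-1/2} B A_2^{-1/2}. Let V ∈ ℝ^{n×k} with Vᵀ V = I_k. Then Vᵀ A_2 V is invertible and A_1^{1/2} · (A_1^{-1} B V (Vᵀ A_2 V)^{-1} Vᵀ) · A_2^{1/2} = C · Π, where Π = A_2^{1/2} V (Vᵀ A_2 V)^{-1} Vᵀ A_2^{1/2} is the matrix of the orthogonal projection of ℝⁿ onto col(A_2^{1/2} V). (In words: conjugating the ALS half-step X ↦ A_1^{-1} B V (Vᵀ A_2 V)^{-1} Vᵀ for the Kronecker-product Hessian by A_1^{1/2}, A_2^{1/2} yields the block power half-step Y ↦ C Π for the matrix C.) -/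

import Mathlib

open Matrix

/-- Column space of a matrix (its range as a linear map). -/
noncomputable def colSpace {m n : ℕ} (X : Matrix (Fin m) (Fin n) ℝ) :
    Submodule ℝ (EuclideanSpace ℝ (Fin m)) :=
  LinearMap.range (Matrix.toEuclideanLin X)

lemma toEuclideanLin_mul' {m n p : ℕ} (A : Matrix (Fin m) (Fin n) ℝ)
    (B : Matrix (Fin n) (Fin p) ℝ) :
    Matrix.toEuclideanLin (A * B) =
      (Matrix.toEuclideanLin A).comp (Matrix.toEuclideanLin B) := by
  apply LinearMap.ext
  intro v
  simp [Matrix.toEuclideanLin_apply, Matrix.mulVec_mulVec]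

lemma colSpace_mul_le {m n p : ℕ} (A : Matrix (Fin m) (Fin n) ℝ)
    (B : Matrix (Fin n) (Fin p) ℝ) : colSpace (A * B) ≤ colSpace A := by
  rw [colSpace, colSpace, toEuclideanLin_mul']
  exact LinearMap.range_comp_le_range _ _

/-- Conjugating the ALS half-step `X ↦ A₁⁻¹ B V (Vᵀ A₂ V)⁻¹ Vᵀ` for the
Kronecker-product Hessian by the square roots `R₁ = A₁^{1/2}`, `R₂ = A₂^{1/2}` yields the block
power half-step `Y ↦ C Π` for `C = A₁^{-1/2} B A₂^{-1/2}`, where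
`Π = A₂^{1/2} V (Vᵀ A₂ V)⁻¹ Vᵀ A₂^{1/2}` is the orthogonal projection onto `col(A₂^{1/2} V)`. -/
theorem stmt17 {m n k : ℕ}
    (A₁ R₁ : Matrix (Fin m) (Fin m) ℝ) (A₂ R₂ : Matrix (Fin n) (Fin n) ℝ)
    (hA₁ : A₁.PosDef) (hA₂ : A₂.PosDef)
    (hR₁ : R₁.PosSemidef) (hR₂ : R₂.PosSemidef)
    (hR₁R₁ : R₁ * R₁ = A₁) (hR₂R₂ : R₂ * R₂ = A₂)
    (B C : Matrix (Fin m) (Fin n) ℝ) (hC : C = R₁⁻¹ * B * R₂⁻¹)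
    (V : Matrix (Fin n) (Fin k) ℝ) (hV : Vᵀ * V = 1)
    (Pi2 : Matrix (Fin n) (Fin n) ℝ) (hPi2 : Pi2 = R₂ * V * (Vᵀ * A₂ * V)⁻¹ * Vᵀ * R₂) :
    IsUnit (Vᵀ * A₂ * V) ∧
      R₁ * (A₁⁻¹ * B * V * (Vᵀ * A₂ * V)⁻¹ * Vᵀ) * R₂ = C * Pi2 ∧
      Pi2ᵀ = Pi2 ∧ Pi2 * Pi2 = Pi2 ∧ colSpace Pi2 = colSpace (R₂ * V) := by
  have hdR₁ : IsUnit R₁.det := by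
    have h : R₁.det * R₁.det = A₁.det := by rw [← Matrix.det_mul, hR₁R₁]
    have hpos : (0:ℝ) < A₁.det := hA₁.det_pos
    refine isUnit_iff_ne_zero.mpr fun h0 => ?_
    rw [h0, mul_zero] at h
    linarith
  have hdR₂ : IsUnit R₂.det := by
    have h : R₂.det * R₂.det = A₂.det := by rw [← Matrix.det_mul, hR₂R₂]
    have hpos : (0:ℝ) < A₂.det := hA₂.det_pos
    refine isUnit_iff_ne_zero.mpr fun h0 => ?_
    rw [h0, mul_zero] at h
    linarith
  have hR₂sym : R₂ᵀ = R₂ := by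
    have := hR₂.1
    rwa [Matrix.IsHermitian, Matrix.conjTranspose_eq_transpose_of_trivial] at this
  have hA₂sym : A₂ᵀ = A₂ := by
    have := hA₂.1
    rwa [Matrix.IsHermitian, Matrix.conjTranspose_eq_transpose_of_trivial] at this
  set G := Vᵀ * A₂ * V with hGdef
  have hG : G.PosDef := by
    refine Matrix.PosDef.of_dotProduct_mulVec_pos ?_ ?_
    · rw [Matrix.IsHermitian, Matrix.conjTranspose_eq_transpose_of_trivial, hGdef]
      simp [Matrix.transpose_mul, hA₂sym, Matrix.mul_assoc]
    · intro x hx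
      have hVx : V *ᵥ x ≠ 0 := by
        intro h
        have h2 : Vᵀ *ᵥ (V *ᵥ x) = x := by
          rw [Matrix.mulVec_mulVec, hV, Matrix.one_mulVec]
        rw [h, Matrix.mulVec_zero] at h2
        exact hx h2.symm
      have hpos := hA₂.dotProduct_mulVec_pos hVx
      have : star x ⬝ᵥ G *ᵥ x = star (V *ᵥ x) ⬝ᵥ A₂ *ᵥ (V *ᵥ x) := by
        rw [hGdef,
          show (Vᵀ * A₂ * V) *ᵥ x = Vᵀ *ᵥ (A₂ *ᵥ (V *ᵥ x)) by
            simp [Matrix.mulVec_mulVec, Matrix.mul_assoc],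
          Matrix.dotProduct_mulVec, Matrix.vecMul_transpose]
        simp
      rw [this]
      exact hpos
  have hGu : IsUnit G := hG.isUnit
  have hGd : IsUnit G.det := (Matrix.isUnit_iff_isUnit_det _).mp hGu
  have hGsym : Gᵀ = G := by
    have := hG.1
    rwa [Matrix.IsHermitian, Matrix.conjTranspose_eq_transpose_of_trivial] at this
  have hA₂cancel : ∀ (X : Matrix (Fin k) (Fin n) ℝ),
      Vᵀ * (R₂ * (R₂ * (V * (G⁻¹ * X)))) = X := by
    intro X
    have : Vᵀ * (R₂ * (R₂ * (V * (G⁻¹ * X)))) = G * (G⁻¹ * X) := by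
      rw [hGdef, ← hR₂R₂]
      simp [Matrix.mul_assoc]
    rw [this, Matrix.mul_nonsing_inv_cancel_left _ _ hGd]
  refine ⟨hGu, ?_, ?_, ?_, ?_⟩
  · rw [hC, hPi2]
    have h1 : R₁ * A₁⁻¹ = R₁⁻¹ := by
      rw [← hR₁R₁, Matrix.mul_inv_rev, Matrix.mul_nonsing_inv_cancel_left _ _ hdR₁]
    simp only [Matrix.mul_assoc]
    rw [Matrix.nonsing_inv_mul_cancel_left _ _ hdR₂, ← Matrix.mul_assoc R₁ A₁⁻¹, h1]
  · rw [hPi2]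
    simp [Matrix.transpose_mul, Matrix.transpose_nonsing_inv, hGsym, hR₂sym, Matrix.mul_assoc]
  · rw [hPi2]
    simp only [Matrix.mul_assoc]
    rw [hA₂cancel]
  · apply le_antisymm
    · rw [hPi2]
      have h : R₂ * V * G⁻¹ * Vᵀ * R₂ = (R₂ * V) * (G⁻¹ * (Vᵀ * R₂)) := by
        simp [Matrix.mul_assoc]
      rw [h]
      exact colSpace_mul_le _ _
    · have hWP : Pi2 * (R₂ * V) = R₂ * V := by
        rw [hPi2]
        simp only [Matrix.mul_assoc]
        have : G⁻¹ * (Vᵀ * (R₂ * (R₂ * V))) = 1 := by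
          have h2 : Vᵀ * (R₂ * (R₂ * V)) = G := by
            rw [hGdef, ← hR₂R₂]; simp [Matrix.mul_assoc]
          rw [h2, Matrix.nonsing_inv_mul _ hGd]
        rw [this, Matrix.mul_one]
      calc colSpace (R₂ * V) = colSpace (Pi2 * (R₂ * V)) := by rw [hWP]
        _ ≤ colSpace Pi2 := colSpace_mul_le _ _
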